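/- arXiv:1405.7828 — 7 statements merged into one kernel-verified Lean document; each statement's English description precedes it below -/
import Mathlib

section
/- For all natural numbers n, k, m with n + m > 2k and 2k > 2m, the ratio of binomial coefficients C(n, k-m) / C(n, k) is at most (k / (n - k + m))^m (as rational/real numbers). -/
lemma arith_core (m p q : ℕ) (h : q ≤ p) :
    (q - (m+1)) * p ^ (m+1) * (q - 1) ^ m ≤ (p - (m+1)) * q ^ (m+1) * (p - 1) ^ m := by
  have h1 : (q - (m+1)) * p ≤ (p - (m+1)) * q := by
    rw [Nat.sub_mul, Nat.sub_mul, Nat.mul_comm q p]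
    exact Nat.sub_le_sub_left (Nat.mul_le_mul_left _ h) _
  have h2 : p * (q - 1) ≤ q * (p - 1) := by
    rw [Nat.mul_sub, Nat.mul_sub, Nat.mul_one, Nat.mul_one, Nat.mul_comm p q]
    exact Nat.sub_le_sub_left h _
  calc (q - (m+1)) * p ^ (m+1) * (q - 1) ^ m
      = ((q - (m+1)) * p) * (p * (q - 1)) ^ m := by rw [mul_pow]; ring
    _ ≤ ((p - (m+1)) * q) * (q * (p - 1)) ^ m :=
        Nat.mul_le_mul h1 (Nat.pow_le_pow_left h2 m)
    _ = (p - (m+1)) * q ^ (m+1) * (p - 1) ^ m := by rw [mul_pow]; ring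

lemma nat_key : ∀ m a n : ℕ, 2 * a + m ≤ n →
    n.choose a * (n - a) ^ m ≤ n.choose (a + m) * (a + m) ^ m := by
  intro m
  induction m using Nat.strong_induction_on with
  | _ m ih =>
    match m with
    | 0 => intro a n h; simp
    | 1 =>
      intro a n h
      simp only [pow_one]
      rw [← Nat.choose_succ_right_eq]
    | (m+2) =>
      intro a n h
      have ih' := ih m (by omega) (a+1) n (by omega)
      have id1 : n.choose (a+1) * (a+1) = n.choose a * (n - a) :=
        Nat.choose_succ_right_eq n a
      have id2 : n.choose (a+m+2) * (a+m+2) = n.choose (a+m+1) * (n - (a+m+1)) :=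
        Nat.choose_succ_right_eq n (a+m+1)
      have key := arith_core m (n - a) (a+m+2) (by omega)
      have e1 : a+m+2 - (m+1) = a+1 := by omega
      have e2 : a+m+2 - 1 = a+m+1 := by omega
      have e3 : n - a - (m+1) = n - (a+m+1) := by omega
      have e4 : n - a - 1 = n - (a+1) := by omega
      rw [e1, e2, e3, e4] at key
      -- key : (a+1) * (n-a)^(m+1) * (a+m+1)^m ≤ (n-(a+m+1)) * (a+m+2)^(m+1) * (n-(a+1))^m
      have hpos : 0 < (n - (a+1)) ^ m := Nat.pow_pos (by omega)
      apply Nat.le_of_mul_le_mul_right _ hpos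
      calc n.choose a * (n - a) ^ (m+2) * (n - (a+1)) ^ m
          = (n.choose a * (n - a)) * ((n - a) ^ (m+1) * (n - (a+1)) ^ m) := by ring
        _ = (n.choose (a+1) * (a+1)) * ((n - a) ^ (m+1) * (n - (a+1)) ^ m) := by rw [id1]
        _ = (n.choose (a+1) * (n - (a+1)) ^ m) * ((a+1) * (n - a) ^ (m+1)) := by ring
        _ ≤ (n.choose (a+1+m) * (a+1+m) ^ m) * ((a+1) * (n - a) ^ (m+1)) :=
            Nat.mul_le_mul_right _ ih'
        _ = n.choose (a+m+1) * ((a+1) * (n - a) ^ (m+1) * (a+m+1) ^ m) := by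
            have : a+1+m = a+m+1 := by ring
            rw [this]; ring
        _ ≤ n.choose (a+m+1) * ((n - (a+m+1)) * (a+m+2) ^ (m+1) * (n - (a+1)) ^ m) :=
            Nat.mul_le_mul_left _ key
        _ = (n.choose (a+m+1) * (n - (a+m+1))) * ((a+m+2) ^ (m+1) * (n - (a+1)) ^ m) := by
            ring
        _ = n.choose (a+m+2) * (a+m+2) ^ (m+2) * (n - (a+1)) ^ m := by
            rw [← id2]; ring

theorem binom_ratio_bound (n k m : ℕ) (h1 : n + m > 2 * k) (h2 : 2 * k > 2 * m) :
    (n.choose (k - m) : ℝ) / (n.choose k : ℝ) ≤ ((k : ℝ) / ((n : ℝ) - k + m)) ^ m := by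
  have hmk : m ≤ k := by omega
  have hkn : k ≤ n := by omega
  set a := k - m with ha
  have hak : k = a + m := by omega
  have han : a ≤ n := by omega
  have hnat := nat_key m a n (by omega)
  have hcast : (n : ℝ) - k + m = ((n - a : ℕ) : ℝ) := by
    rw [Nat.cast_sub han]
    push_cast [hak]
    ring
  rw [hcast, hak, div_pow, div_le_div_iff₀]
  · push_cast [hak] at hnat ⊢
    calc (n.choose a : ℝ) * ((n - a : ℕ) : ℝ) ^ m
        = ((n.choose a * (n - a) ^ m : ℕ) : ℝ) := by push_cast; ring
      _ ≤ ((n.choose (a + m) * (a + m) ^ m : ℕ) : ℝ) := by exact_mod_cast hnat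
      _ = ((a : ℝ) + m) ^ m * (n.choose (a + m) : ℝ) := by push_cast; ring
  · exact_mod_cast Nat.choose_pos (by omega : a + m ≤ n)
  · have : 0 < n - a := by omega
    positivity
end

section
/- Let q ∈ [0,1] be a real number and n, r natural numbers with r ≤ n. Then ∑_{i=0}^{r} C(n,i) * (1-q)^i * q^(n-i) = ∑_{k=0}^{r} α_k * q^(n-k), where α_k = (-1)^(r-k) * C(n,k) * C(n-k-1, r-k). -/
theorem binomial_tail_as_alpha_sum (q : ℝ) (hq0 : 0 ≤ q) (hq1 : q ≤ 1) (n r : ℕ) (hrn : r ≤ n) :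
    ∑ i ∈ Finset.range (r + 1), (n.choose i : ℝ) * (1 - q) ^ i * q ^ (n - i) =
      ∑ k ∈ Finset.range (r + 1),
        ((-1 : ℝ) ^ (r - k) * (n.choose k : ℝ) * ((n - k - 1).choose (r - k) : ℝ)) * q ^ (n - k) := by
  clear hq0 hq1
  revert hrn
  induction r with
  | zero => intro _; simp
  | succ r ih =>
    intro hrn
    have hr : r ≤ n := Nat.le_of_succ_le hrn
    rw [Finset.sum_range_succ, ih hr]
    conv_rhs => rw [Finset.sum_range_succ]
    simp only [Nat.sub_self, pow_zero, Nat.choose_zero_right, Nat.cast_one, one_mul, mul_one]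
    -- reduce to an equality of sums
    have hsplit : ∀ k ∈ Finset.range (r + 1),
        ((-1 : ℝ) ^ (r + 1 - k) * (n.choose k : ℝ) * ((n - k - 1).choose (r + 1 - k) : ℝ))
            * q ^ (n - k)
          = ((-1 : ℝ) ^ (r - k) * (n.choose k : ℝ) * ((n - k - 1).choose (r - k) : ℝ))
              * q ^ (n - k)
            + ((n.choose (r+1) : ℝ)) * ((-1 : ℝ) ^ (r + 1 - k) * ((r+1).choose k : ℝ)
              * q ^ (r + 1 - k)) * q ^ (n - (r+1)) := by
      intro k hk
      rw [Finset.mem_range] at hk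
      have hkr : k ≤ r := Nat.lt_succ_iff.mp hk
      have hkn : k < n := lt_of_le_of_lt hkr hrn
      have h1 : r + 1 - k = (r - k) + 1 := by omega
      have h2 : n - k = (n - k - 1) + 1 := by omega
      have hpascal : ((n - k - 1).choose (r + 1 - k) : ℝ)
          = ((n - k).choose (r + 1 - k) : ℝ) - ((n - k - 1).choose (r - k) : ℝ) := by
        rw [h1, h2, Nat.choose_succ_succ]
        push_cast
        ring
      have htri : (n.choose k : ℝ) * ((n - k).choose (r + 1 - k) : ℝ)
          = (n.choose (r+1) : ℝ) * (((r+1).choose k : ℝ)) := by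
        have h := Nat.choose_mul (n := n) (Nat.le_of_lt hk)
        exact_mod_cast h.symm
      have hsign : (-1 : ℝ) ^ (r + 1 - k) = -(-1 : ℝ) ^ (r - k) := by
        rw [h1, pow_succ]; ring
      have hpow : q ^ (n - k) = q ^ (r + 1 - k) * q ^ (n - (r+1)) := by
        rw [← pow_add]; congr 1; omega
      rw [hpascal, hsign]
      calc -(-1 : ℝ) ^ (r - k) * (n.choose k : ℝ)
            * (((n - k).choose (r + 1 - k) : ℝ) - ((n - k - 1).choose (r - k) : ℝ)) * q ^ (n - k)
          = (-1 : ℝ) ^ (r - k) * (n.choose k : ℝ) * ((n - k - 1).choose (r - k) : ℝ) * q ^ (n - k)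
            + (-(-1 : ℝ) ^ (r - k)) * ((n.choose k : ℝ) * ((n - k).choose (r + 1 - k) : ℝ))
              * q ^ (n - k) := by ring
        _ = _ := by rw [htri, hpow]; ring
    rw [Finset.sum_congr rfl hsplit, Finset.sum_add_distrib]
    have hbin : ∑ k ∈ Finset.range (r + 1 + 1),
        (-1 : ℝ) ^ (r + 1 - k) * ((r+1).choose k : ℝ) * q ^ (r + 1 - k) = (1 - q) ^ (r+1) := by
      rw [show (1 - q : ℝ) = 1 + (-q) by ring, add_pow]
      refine Finset.sum_congr rfl fun k hk => ?_
      rw [neg_pow]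
      push_cast
      ring
    have hbin' : ∑ k ∈ Finset.range (r + 1),
        (-1 : ℝ) ^ (r + 1 - k) * ((r+1).choose k : ℝ) * q ^ (r + 1 - k)
          = (1 - q) ^ (r+1) - 1 := by
      have := hbin
      rw [Finset.sum_range_succ] at this
      simp only [Nat.sub_self, pow_zero, Nat.choose_self, Nat.cast_one] at this
      linarith
    have hS : ∑ x ∈ Finset.range (r+1), (n.choose (r+1) : ℝ)
          * ((-1 : ℝ)^(r+1-x) * (((r+1).choose x : ℝ)) * q^(r+1-x)) * q^(n-(r+1))
        = (n.choose (r+1) : ℝ) * ((1-q)^(r+1) - 1) * q^(n-(r+1)) := by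
      rw [← Finset.sum_mul, ← Finset.mul_sum, hbin']
    rw [hS]
    ring
end

section
/- For all natural numbers n, m, k with k ≤ n ≤ m, the ratio C(n,k)/C(m,k) is at most (n/m)^k. -/
lemma descFac_aux (k n m : ℕ) (hkn : k ≤ n) (hnm : n ≤ m) :
    n.descFactorial k * m ^ k ≤ m.descFactorial k * n ^ k := by
  induction k with
  | zero => simp
  | succ k ih =>
    have hk : k ≤ n := Nat.le_of_succ_le hkn
    rw [Nat.descFactorial_succ, Nat.descFactorial_succ, pow_succ, pow_succ]
    have h1 : (n - k) * m ≤ (m - k) * n := by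
      rw [Nat.sub_mul, Nat.sub_mul, Nat.mul_comm n m]
      exact Nat.sub_le_sub_left (Nat.mul_le_mul_left k hnm) _
    calc (n - k) * n.descFactorial k * (m ^ k * m)
        = (n - k) * m * (n.descFactorial k * m ^ k) := by ring
      _ ≤ (m - k) * n * (m.descFactorial k * n ^ k) :=
          Nat.mul_le_mul h1 (ih hk)
      _ = (m - k) * m.descFactorial k * (n ^ k * n) := by ring

lemma choose_aux (k n m : ℕ) (hkn : k ≤ n) (hnm : n ≤ m) :
    n.choose k * m ^ k ≤ m.choose k * n ^ k := by
  have h := descFac_aux k n m hkn hnm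
  rw [Nat.descFactorial_eq_factorial_mul_choose, Nat.descFactorial_eq_factorial_mul_choose] at h
  have := k.factorial_pos
  calc n.choose k * m ^ k = Nat.factorial k * n.choose k * m ^ k / Nat.factorial k := by
        rw [Nat.mul_assoc, Nat.mul_div_cancel_left _ this]
    _ ≤ Nat.factorial k * m.choose k * n ^ k / Nat.factorial k := by
        apply Nat.div_le_div_right
        exact h
    _ = m.choose k * n ^ k := by
        rw [Nat.mul_assoc, Nat.mul_div_cancel_left _ this]

theorem choose_ratio_le_pow (n m k : ℕ) (hkn : k ≤ n) (hnm : n ≤ m) :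
    (n.choose k : ℝ) / (m.choose k : ℝ) ≤ ((n : ℝ) / m) ^ k := by
  rcases Nat.eq_zero_or_pos m with hm | hm
  · subst hm
    obtain rfl := Nat.le_zero.mp hnm
    obtain rfl := Nat.le_zero.mp hkn
    simp
  have hmk : 0 < m.choose k := Nat.choose_pos (hkn.trans hnm)
  have hmpos : (0:ℝ) < m := by exact_mod_cast hm
  rw [div_pow, div_le_div_iff₀ (by exact_mod_cast hmk) (by positivity)]
  rw [mul_comm ((n:ℝ)^k)]; exact_mod_cast choose_aux k n m hkn hnm
end

section
/- Let H(x) = -x·log x - (1-x)·log(1-x) be the binary entropy (natural log), let d, γ, ε, α be reals with γ > 1/2, 0 < ε < α, 2γα < 1, and d > 1 + γ·(1-α)/(1-2γα). Then the function F(x) = H(x) + (1/2)·H(2γx) + 2dγx·H(1/(2γ)) - d·H(x) is convex on [ε, α]. -/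
noncomputable def binEnt (x : ℝ) : ℝ := -x * Real.log x - (1 - x) * Real.log (1 - x)

lemma binEnt_eq : binEnt = Real.binEntropy := by
  funext p
  simp only [binEnt, Real.binEntropy, Real.log_inv]
  ring

lemma hasDerivAt_binEnt {x : ℝ} (h0 : x ≠ 0) (h1 : x ≠ 1) :
    HasDerivAt binEnt (Real.log (1 - x) - Real.log x) x :=
  binEnt_eq ▸ Real.hasDerivAt_binEntropy h0 h1

theorem F_convex (d γ ε α : ℝ) (hγ : γ > 1 / 2) (hε : 0 < ε) (hεα : ε < α)
    (hα : 2 * γ * α < 1) (hd : d > 1 + γ * (1 - α) / (1 - 2 * γ * α)) :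
    ConvexOn ℝ (Set.Icc ε α)
      (fun x => binEnt x + (1 / 2) * binEnt (2 * γ * x) +
        2 * d * γ * x * binEnt (1 / (2 * γ)) - d * binEnt x) := by
  have hγ0 : (0:ℝ) < γ := by linarith
  have hα1 : α < 1 := by nlinarith
  have htα : 0 < 1 - 2 * γ * α := by linarith
  -- d - 1 > γ (1-α)/(1-2γα)
  have hd1 : (d - 1) * (1 - 2 * γ * α) > γ * (1 - α) := by
    have := (div_lt_iff₀ htα).mp (by linarith : γ * (1 - α) / (1 - 2 * γ * α) < d - 1)
    linarith
  have hdγ : d - 1 > γ := by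
    have h1α : 1 - 2 * γ * α < 1 - α := by nlinarith
    nlinarith
  set c : ℝ := 2 * d * γ * binEnt (1 / (2 * γ)) with hc
  apply convexOn_of_hasDerivWithinAt2_nonneg (convex_Icc ε α)
    (f' := fun x => (1 - d) * (Real.log (1 - x) - Real.log x)
      + γ * (Real.log (1 - 2 * γ * x) - Real.log (2 * γ * x)) + c)
    (f'' := fun x => (1 - d) * (-(1 - x)⁻¹ - x⁻¹)
      + γ * (-(2 * γ) / (1 - 2 * γ * x) - x⁻¹))
  · -- continuity
    rw [binEnt_eq]
    apply Continuous.continuousOn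
    fun_prop
  · -- first derivative
    intro x hx
    rw [interior_Icc] at hx
    obtain ⟨hxε, hxα⟩ := hx
    have hx0 : 0 < x := lt_trans hε hxε
    have hx1 : x < 1 := lt_trans hxα hα1
    have h2γ : 0 < 2 * γ * x := by positivity
    have h2γ1 : 2 * γ * x < 1 := by nlinarith
    have hlin : HasDerivAt (fun y : ℝ => 2 * γ * y) (2 * γ) x := by
      simpa using (hasDerivAt_id x).const_mul (2 * γ)
    have hb1 : HasDerivAt binEnt (Real.log (1 - x) - Real.log x) x :=
      hasDerivAt_binEnt hx0.ne' hx1.ne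
    have hb2 : HasDerivAt (fun y => binEnt (2 * γ * y))
        ((Real.log (1 - 2 * γ * x) - Real.log (2 * γ * x)) * (2 * γ)) x :=
      (hasDerivAt_binEnt h2γ.ne' h2γ1.ne).comp x hlin
    have hcx : HasDerivAt (fun y : ℝ => 2 * d * γ * y * binEnt (1 / (2 * γ))) c x := by
      have : HasDerivAt (fun y : ℝ => 2 * d * γ * y) (2 * d * γ) x := by
        simpa using (hasDerivAt_id x).const_mul (2 * d * γ)
      simpa [hc] using this.mul_const (binEnt (1 / (2 * γ)))
    have := ((hb1.add ((hb2.const_mul (1/2 : ℝ)).add hcx)).sub (hb1.const_mul d))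
    refine (HasDerivAt.hasDerivWithinAt ?_)
    convert this using 1
    · funext y; simp only [Pi.add_apply, Pi.sub_apply]; ring
    · ring
  · -- second derivative
    intro x hx
    rw [interior_Icc] at hx
    obtain ⟨hxε, hxα⟩ := hx
    have hx0 : 0 < x := lt_trans hε hxε
    have hx1 : x < 1 := lt_trans hxα hα1
    have h2γ : 0 < 2 * γ * x := by positivity
    have h2γ1 : 2 * γ * x < 1 := by nlinarith
    have hl1 : HasDerivAt (fun y : ℝ => Real.log (1 - y)) (-(1 - x)⁻¹) x := by
      have h := (Real.hasDerivAt_log (by linarith : (1:ℝ) - x ≠ 0)).comp x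
        ((hasDerivAt_const x (1:ℝ)).sub (hasDerivAt_id x))
      exact h.congr_deriv (by ring)
    have hl2 : HasDerivAt (fun y : ℝ => Real.log y) x⁻¹ x := Real.hasDerivAt_log hx0.ne'
    have hl3 : HasDerivAt (fun y : ℝ => Real.log (1 - 2 * γ * y))
        ((1 - 2 * γ * x)⁻¹ * (0 - 2 * γ)) x := by
      exact (Real.hasDerivAt_log (by linarith : (1:ℝ) - 2 * γ * x ≠ 0)).comp x
        ((hasDerivAt_const x (1:ℝ)).sub (by simpa using (hasDerivAt_id x).const_mul (2 * γ)))
    have hl4 : HasDerivAt (fun y : ℝ => Real.log (2 * γ * y)) ((2 * γ * x)⁻¹ * (2 * γ)) x := by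
      exact (Real.hasDerivAt_log h2γ.ne').comp x
        (by simpa using (hasDerivAt_id x).const_mul (2 * γ))
    have := ((((hl1.sub hl2).const_mul (1 - d)).add
      ((hl3.sub hl4).const_mul γ)).add_const c)
    refine (HasDerivAt.hasDerivWithinAt ?_)
    convert this using 1
    · rfl
    have h2γx : (2 * γ * x)⁻¹ * (2 * γ) = x⁻¹ := by
      field_simp
    rw [h2γx]
    ring
  · -- nonnegativity of second derivative
    intro x hx
    rw [interior_Icc] at hx
    obtain ⟨hxε, hxα⟩ := hx
    have hx0 : 0 < x := lt_trans hε hxε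
    have hx1 : x < 1 := lt_trans hxα hα1
    have h2γ1 : 0 < 1 - 2 * γ * x := by nlinarith
    have key : 0 ≤ (d - 1) * (1 - 2 * γ * x) - γ * (1 - x) := by nlinarith
    have hne1 : x ≠ 0 := hx0.ne'
    have hne2 : (1:ℝ) - x ≠ 0 := by linarith
    have hne3 : (1:ℝ) - 2 * γ * x ≠ 0 := h2γ1.ne'
    have heq : (1 - d) * (-(1 - x)⁻¹ - x⁻¹) + γ * (-(2 * γ) / (1 - 2 * γ * x) - x⁻¹)
        = ((d - 1) * (1 - 2 * γ * x) - γ * (1 - x)) / (x * (1 - x) * (1 - 2 * γ * x)) := by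
      rw [eq_div_iff (mul_ne_zero (mul_ne_zero hne1 hne2) hne3)]
      have e1 : (1 - x)⁻¹ * (1 - x) = 1 := inv_mul_cancel₀ hne2
      have e2 : x⁻¹ * x = 1 := inv_mul_cancel₀ hne1
      have e3 : (1 - 2 * γ * x)⁻¹ * (1 - 2 * γ * x) = 1 := inv_mul_cancel₀ hne3
      rw [div_eq_mul_inv]
      linear_combination (-(1 - d) * x * (1 - 2 * γ * x)) * e1 + (-(1-d) * (1 - x) * (1 - 2 * γ * x) - γ * (1 - x) * (1 - 2 * γ * x)) * e2 + (-2 * γ * γ * x * (1 - x)) * e3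
    rw [heq]
    exact div_nonneg key (mul_pos (mul_pos hx0 (by linarith)) h2γ1).le
end

section
/- Let C1, C3, C5 ∈ (0,1) with C1 < C3 < C5 and constants C2, C4, C6 defining a piecewise linear e(α) through (0,0),(C1,C2),(C3,C4),(C5,C6),(1,1) with slopes decreasing and slope 1 on [C3,C5] (i.e. C2/C1 > (C4-C2)/(C3-C1) > (C6-C4)/(C5-C3) = 1 > (1-C6)/(1-C5)), and C2 + C4 ≥ 1. Define the piecewise linear function o(α) on [C3,1] through (C3, C3-C1), (C5, C5-C1), (1,1). Then for all α ∈ [C3, 1] and all a, d ≥ 0 with a + d ≤ o(α): e(α-a) + a + e(α-d) + d - 1 ≥ o(α). -/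
set_option maxHeartbeats 2000000 in
theorem overlap_cut_bound (C1 C2 C3 C4 C5 C6 : ℝ) (e o : ℝ → ℝ)
    (hC1 : 0 < C1) (h13 : C1 < C3) (h35 : C3 < C5) (h51 : C5 < 1)
    (hC2 : 0 < C2) (hC4 : C4 < 1) (hC6 : C6 < 1)
    (hslope1 : C2 / C1 > (C4 - C2) / (C3 - C1))
    (hslope2 : (C4 - C2) / (C3 - C1) > 1)
    (hslope3 : C6 - C4 = C5 - C3)
    (hslope4 : (1 : ℝ) > (1 - C6) / (1 - C5))
    (hC24 : C2 + C4 ≥ 1)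
    (he : e = fun α : ℝ =>
      if α ≤ C1 then (C2 / C1) * α
      else if α ≤ C3 then C2 + ((C4 - C2) / (C3 - C1)) * (α - C1)
      else if α ≤ C5 then C4 + (α - C3)
      else C6 + ((1 - C6) / (1 - C5)) * (α - C5))
    (ho : o = fun α : ℝ =>
      if α ≤ C5 then α - C1
      else (C5 - C1) + ((1 - (C5 - C1)) / (1 - C5)) * (α - C5)) :
    ∀ α ∈ Set.Icc C3 1, ∀ a d : ℝ, 0 ≤ a → 0 ≤ d → a + d ≤ o α →
      e (α - a) + a + e (α - d) + d - 1 ≥ o α := by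
  set m1 := C2 / C1 with hm1def
  set m2 := (C4 - C2) / (C3 - C1) with hm2def
  set m4 := (1 - C6) / (1 - C5) with hm4def
  set mo := (1 - (C5 - C1)) / (1 - C5) with hmodef
  clear_value m1 m2 m4 mo
  have h31 : (0:ℝ) < C3 - C1 := by linarith
  have h15 : (0:ℝ) < 1 - C5 := by linarith
  have hm1C1 : m1 * C1 = C2 := by
    rw [hm1def]; field_simp
  have hm2e : m2 * (C3 - C1) = C4 - C2 := by
    rw [hm2def]; field_simp
  have hm4e : m4 * (1 - C5) = 1 - C6 := by
    rw [hm4def]; field_simp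
  have hmoe : mo * (1 - C5) = 1 - (C5 - C1) := by
    rw [hmodef]; field_simp
  have hm12 : m2 < m1 := hslope1
  have hm21 : 1 < m2 := hslope2
  have hm41 : m4 < 1 := hslope4
  have hm40 : 0 ≤ m4 := by nlinarith [hm4e, h15, hC6]
  have h42 : C3 - C1 < C4 - C2 := by nlinarith [hm2e]
  have hC65 : C5 < C6 := by nlinarith [hm4e]
  have hC64 : C4 < C6 := by linarith [hslope3]
  have hmo1 : 1 < mo := by nlinarith [hmoe]
  -- e is below each of the four lines
  have hE1 : ∀ t, e t ≤ m1 * t := by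
    intro t
    rw [he]; simp only
    split_ifs with h1 h2 h3
    · exact le_rfl
    · linarith [hm1C1, mul_nonneg (by linarith : (0:ℝ) ≤ m1 - m2) (by linarith : (0:ℝ) ≤ t - C1)]
    · linarith [hm1C1, hm2e,
        mul_nonneg (by linarith : (0:ℝ) ≤ m1 - m2) (by linarith : (0:ℝ) ≤ t - C1),
        mul_nonneg (by linarith : (0:ℝ) ≤ m2 - 1) (by linarith : (0:ℝ) ≤ t - C3)]
    · linarith [hm1C1, hm2e, hm4e,
        mul_nonneg (by linarith : (0:ℝ) ≤ m1 - m2) (by linarith : (0:ℝ) ≤ t - C1),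
        mul_nonneg (by linarith : (0:ℝ) ≤ m2 - 1) (by linarith : (0:ℝ) ≤ t - C3),
        mul_nonneg (by linarith : (0:ℝ) ≤ 1 - m4) (by linarith : (0:ℝ) ≤ t - C5)]
  have hE2 : ∀ t, e t ≤ C2 + m2 * (t - C1) := by
    intro t
    rw [he]; simp only
    split_ifs with h1 h2 h3
    · linarith [hm1C1, mul_nonneg (by linarith : (0:ℝ) ≤ m1 - m2) (by linarith : (0:ℝ) ≤ C1 - t)]
    · exact le_rfl
    · linarith [hm2e, mul_nonneg (by linarith : (0:ℝ) ≤ m2 - 1) (by linarith : (0:ℝ) ≤ t - C3)]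
    · linarith [hm2e, hm4e,
        mul_nonneg (by linarith : (0:ℝ) ≤ m2 - 1) (by linarith : (0:ℝ) ≤ t - C3),
        mul_nonneg (by linarith : (0:ℝ) ≤ 1 - m4) (by linarith : (0:ℝ) ≤ t - C5)]
  have hE3 : ∀ t, e t ≤ C4 + (t - C3) := by
    intro t
    rw [he]; simp only
    split_ifs with h1 h2 h3
    · linarith [hm1C1, hm2e,
        mul_nonneg (by linarith : (0:ℝ) ≤ m1 - m2) (by linarith : (0:ℝ) ≤ C1 - t),
        mul_nonneg (by linarith : (0:ℝ) ≤ m2 - 1) (by linarith : (0:ℝ) ≤ C3 - t)]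
    · linarith [hm2e, mul_nonneg (by linarith : (0:ℝ) ≤ m2 - 1) (by linarith : (0:ℝ) ≤ C3 - t)]
    · exact le_rfl
    · linarith [hm4e, hslope3,
        mul_nonneg (by linarith : (0:ℝ) ≤ 1 - m4) (by linarith : (0:ℝ) ≤ t - C5)]
  have hE4 : ∀ t, e t ≤ C6 + m4 * (t - C5) := by
    intro t
    rw [he]; simp only
    split_ifs with h1 h2 h3
    · linarith [hm1C1, hm2e, hm4e, hslope3,
        mul_nonneg (by linarith : (0:ℝ) ≤ m1 - m2) (by linarith : (0:ℝ) ≤ C1 - t),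
        mul_nonneg (by linarith : (0:ℝ) ≤ m2 - 1) (by linarith : (0:ℝ) ≤ C3 - t),
        mul_nonneg (by linarith : (0:ℝ) ≤ 1 - m4) (by linarith : (0:ℝ) ≤ C5 - t)]
    · linarith [hm2e, hm4e, hslope3,
        mul_nonneg (by linarith : (0:ℝ) ≤ m2 - 1) (by linarith : (0:ℝ) ≤ C3 - t),
        mul_nonneg (by linarith : (0:ℝ) ≤ 1 - m4) (by linarith : (0:ℝ) ≤ C5 - t)]
    · linarith [hm4e, hslope3,
        mul_nonneg (by linarith : (0:ℝ) ≤ 1 - m4) (by linarith : (0:ℝ) ≤ C5 - t)]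
    · exact le_rfl
  -- value lemmas
  have hval1 : ∀ t, t ≤ C1 → e t = m1 * t := by
    intro t ht; rw [he]; simp only [if_pos ht]
  have hval3 : ∀ t, C3 ≤ t → t ≤ C5 → e t = C4 + (t - C3) := by
    intro t ht1 ht2
    rw [he]; simp only
    rw [if_neg (by linarith)]
    rcases le_or_gt t C3 with h | h
    · have : t = C3 := le_antisymm h ht1
      subst this
      rw [if_pos le_rfl]
      linarith [hm2e]
    · rw [if_neg (by linarith), if_pos ht2]
  have hval4 : ∀ t, C5 < t → e t = C6 + m4 * (t - C5) := by
    intro t ht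
    rw [he]; simp only
    rw [if_neg (by linarith), if_neg (by linarith), if_neg (by linarith)]
  -- chord inequality (concavity of e)
  have chord : ∀ p t q : ℝ, p ≤ t → t ≤ q →
      (t - p) * e q + (q - t) * e p ≤ (q - p) * e t := by
    intro p t q hpt htq
    rcases le_or_gt t C1 with h | h
    · rw [hval1 t h]
      have h1 := mul_le_mul_of_nonneg_left (hE1 q) (by linarith : (0:ℝ) ≤ t - p)
      have h2 := mul_le_mul_of_nonneg_left (hE1 p) (by linarith : (0:ℝ) ≤ q - t)
      linarith [h1, h2]
    rcases le_or_gt t C3 with h' | h'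
    · have het : e t = C2 + m2 * (t - C1) := by
        rw [he]; simp only [if_neg (not_le.mpr h), if_pos h']
      rw [het]
      have h1 := mul_le_mul_of_nonneg_left (hE2 q) (by linarith : (0:ℝ) ≤ t - p)
      have h2 := mul_le_mul_of_nonneg_left (hE2 p) (by linarith : (0:ℝ) ≤ q - t)
      linarith [h1, h2]
    rcases le_or_gt t C5 with h'' | h''
    · rw [hval3 t (le_of_lt h') h'']
      have h1 := mul_le_mul_of_nonneg_left (hE3 q) (by linarith : (0:ℝ) ≤ t - p)
      have h2 := mul_le_mul_of_nonneg_left (hE3 p) (by linarith : (0:ℝ) ≤ q - t)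
      linarith [h1, h2]
    · rw [hval4 t h'']
      have h1 := mul_le_mul_of_nonneg_left (hE4 q) (by linarith : (0:ℝ) ≤ t - p)
      have h2 := mul_le_mul_of_nonneg_left (hE4 p) (by linarith : (0:ℝ) ≤ q - t)
      linarith [h1, h2]
  -- main
  rintro α ⟨hα3, hα1⟩ a d ha hd had
  obtain ⟨S, hSdef⟩ : ∃ S, o α = S := ⟨_, rfl⟩
  rw [hSdef] at had ⊢
  rcases le_or_gt α C5 with hαC5 | hαC5
  · -- o α = α - C1
    have hoval : S = α - C1 := by rw [← hSdef, ho]; simp only [if_pos hαC5]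
    have heα : e α = C4 + (α - C3) := hval3 α hα3 hαC5
    have hep : e (α - S) = C2 := by
      rw [hoval]
      have : α - (α - C1) = C1 := by ring
      rw [this, hval1 C1 le_rfl, hm1C1]
    have hS : 0 < S := by rw [hoval]; linarith
    have hA : e α + e (α - S) ≥ 1 := by rw [heα, hep]; linarith
    have hB : 2 * e α ≥ S + 1 := by rw [heα, hoval]; linarith
    have chord1 := chord (α - S) (α - a) α (by linarith) (by linarith)
    have chord2 := chord (α - S) (α - d) α (by linarith) (by linarith)
    have hh1 : 0 ≤ (a + d) * (e α + e (α - S) - 1) :=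
      mul_nonneg (by linarith) (by linarith)
    have hh2 : 0 ≤ (S - (a + d)) * (2 * e α - S - 1) :=
      mul_nonneg (by linarith) (by linarith)
    have key : 0 ≤ S * (e (α - a) + a + e (α - d) + d - 1 - S) := by
      linarith [chord1, chord2, hh1, hh2]
    by_contra hcon
    push_neg at hcon
    have hneg : S * (e (α - a) + a + e (α - d) + d - 1 - S) < 0 :=
      mul_neg_of_pos_of_neg hS (by linarith)
    linarith
  · -- o α = (C5 - C1) + mo * (α - C5)
    have hoval : S = (C5 - C1) + mo * (α - C5) := by
      rw [← hSdef, ho]; simp only [if_neg (not_le.mpr hαC5)]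
    have heα : e α = C6 + m4 * (α - C5) := hval4 α hαC5
    have hu0 : 0 < α - C5 := by linarith
    have hu1 : α - C5 ≤ 1 - C5 := by linarith
    have hpC1 : α - S ≤ C1 := by
      rw [hoval]
      linarith [mul_nonneg (by linarith : (0:ℝ) ≤ mo - 1) (le_of_lt hu0)]
    have hp0 : (α - S) * (1 - C5) = C1 * (1 - C5 - (α - C5)) := by
      rw [hoval]
      linear_combination (-(α - C5)) * hmoe
    have hep : e (α - S) = m1 * (α - S) := hval1 _ hpC1
    have hS : 0 < S := by
      rw [hoval]
      linarith [mul_nonneg (by linarith : (0:ℝ) ≤ mo - 1) (le_of_lt hu0)]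
    have hA : e α + e (α - S) ≥ 1 := by
      rw [heα, hep]
      have key : (C6 + m4 * (α - C5) + m1 * (α - S) - 1) * (1 - C5)
          = (1 - C5 - (α - C5)) * (C2 + C6 - 1) := by
        linear_combination (α - C5) * hm4e + m1 * hp0 + (1 - C5 - (α - C5)) * hm1C1
      nlinarith [key, mul_nonneg (by linarith : (0:ℝ) ≤ 1 - C5 - (α - C5))
        (by linarith : (0:ℝ) ≤ C2 + C6 - 1), h15]
    have hB : 2 * e α ≥ S + 1 := by
      rw [heα, hoval]
      have key : (2 * (C6 + m4 * (α - C5)) - ((C5 - C1) + mo * (α - C5) + 1)) * (1 - C5)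
          = (2 * C6 - C5 + C1 - 1) * (1 - C5 - (α - C5)) := by
        linear_combination (2 * (α - C5)) * hm4e - (α - C5) * hmoe
      nlinarith [key, mul_nonneg (by linarith : (0:ℝ) ≤ 2 * C6 - C5 + C1 - 1)
        (by linarith : (0:ℝ) ≤ 1 - C5 - (α - C5)), h15]
    have chord1 := chord (α - S) (α - a) α (by linarith) (by linarith)
    have chord2 := chord (α - S) (α - d) α (by linarith) (by linarith)
    have hh1 : 0 ≤ (a + d) * (e α + e (α - S) - 1) :=
      mul_nonneg (by linarith) (by linarith)
    have hh2 : 0 ≤ (S - (a + d)) * (2 * e α - S - 1) :=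
      mul_nonneg (by linarith) (by linarith)
    have key : 0 ≤ S * (e (α - a) + a + e (α - d) + d - 1 - S) := by
      linarith [chord1, chord2, hh1, hh2]
    by_contra hcon
    push_neg at hcon
    have hneg : S * (e (α - a) + a + e (α - d) + d - 1 - S) < 0 :=
      mul_neg_of_pos_of_neg hS (by linarith)
    linarith
end

section
/- Let C1=0.2301, C3=0.3322, C5=0.4377, and let e be the piecewise linear function through (0,0),(C1,0.4377),(C3,0.5623),(C5,0.6678),(1,1), and o the piecewise linear function on [C3,1] through (C3,C3-C1),(C5,C5-C1),(1,1). Then for all α ∈ [C3,1]: (e(α) + o(α))/2 ≥ α. -/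
/-- Piecewise linear function through (0,0), (0.2301,0.4377), (0.3322,0.5623),
(0.4377,0.6678), (1,1). -/
noncomputable def eFun (α : ℝ) : ℝ :=
  if α ≤ 0.2301 then (0.4377 / 0.2301) * α
  else if α ≤ 0.3322 then 0.4377 + ((0.5623 - 0.4377) / (0.3322 - 0.2301)) * (α - 0.2301)
  else if α ≤ 0.4377 then 0.5623 + (α - 0.3322)
  else 0.6678 + ((1 - 0.6678) / (1 - 0.4377)) * (α - 0.4377)

/-- Piecewise linear function on [0.3322,1] through (0.3322, 0.3322-0.2301),
(0.4377, 0.4377-0.2301), (1,1). -/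
noncomputable def oFun (α : ℝ) : ℝ :=
  if α ≤ 0.4377 then α - 0.2301
  else (0.4377 - 0.2301) + ((1 - (0.4377 - 0.2301)) / (1 - 0.4377)) * (α - 0.4377)

theorem hall_condition_estimate :
    ∀ α ∈ Set.Icc (0.3322 : ℝ) 1, (eFun α + oFun α) / 2 ≥ α := by
  rintro α ⟨h1, h2⟩
  unfold eFun oFun
  rw [if_neg (by norm_num; linarith : ¬ α ≤ (0.2301:ℝ))]
  by_cases ha : α ≤ 0.3322
  · have : α = 0.3322 := le_antisymm ha h1
    subst this; norm_num
  · rw [if_neg ha]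
    by_cases h : α ≤ 0.4377
    · rw [if_pos h, if_pos h]; nlinarith
    · rw [if_neg h, if_neg h]; nlinarith [h2, not_le.mp h]
end

section
/- Let H be the binary entropy function (natural log), and let d be a real number with d > 2 + β for some real β > 1. Then there exists ε > 0 and a constant C such that for all natural numbers N ≥ 1 and all integers k with 1 ≤ k ≤ ε·N: N · C(N,k) · C(N, ⌈βk⌉ - 1) · (C(⌈βk⌉-1, k) / C(N,k))^d ≤ k · (C · (k/N)^(d-β-2))^k. -/
open Real

/-- descFactorial ratio bound: for `m ≤ N`, `m.descFactorial k * N^k ≤ N.descFactorial k * m^k`. -/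
lemma descFact_ratio (m N : ℕ) (h : m ≤ N) :
    ∀ k : ℕ, m.descFactorial k * N ^ k ≤ N.descFactorial k * m ^ k := by
  intro k
  induction k with
  | zero => simp
  | succ k ih =>
    rw [Nat.descFactorial_succ, Nat.descFactorial_succ, pow_succ, pow_succ]
    have h1 : (m - k) * N ≤ (N - k) * m := by
      rw [Nat.sub_mul, Nat.sub_mul]
      have : k * m ≤ k * N := Nat.mul_le_mul_left k h
      have h2 : m * N - k * N ≤ m * N - k * m := Nat.sub_le_sub_left this (m * N)
      calc m * N - k * N ≤ m * N - k * m := h2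
        _ = N * m - k * m := by rw [mul_comm m N]
    calc (m - k) * m.descFactorial k * (N ^ k * N)
        = ((m - k) * N) * (m.descFactorial k * N ^ k) := by ring
      _ ≤ ((N - k) * m) * (N.descFactorial k * m ^ k) :=
          Nat.mul_le_mul h1 ih
      _ = (N - k) * N.descFactorial k * (m ^ k * m) := by ring

lemma choose_ratio_nat (m N k : ℕ) (h : m ≤ N) :
    m.choose k * N ^ k ≤ N.choose k * m ^ k := by
  have key := descFact_ratio m N h k
  rw [Nat.descFactorial_eq_factorial_mul_choose, Nat.descFactorial_eq_factorial_mul_choose] at key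
  have : k.factorial * (m.choose k * N ^ k) ≤ k.factorial * (N.choose k * m ^ k) := by
    calc k.factorial * (m.choose k * N ^ k) = k.factorial * m.choose k * N ^ k := by ring
      _ ≤ k.factorial * N.choose k * m ^ k := key
      _ = k.factorial * (N.choose k * m ^ k) := by ring
  exact Nat.le_of_mul_le_mul_left this k.factorial_pos

/-- `k^k ≤ k! * exp k`. -/
lemma pow_self_le_fact_mul_exp (k : ℕ) : (k : ℝ) ^ k ≤ (k.factorial : ℝ) * Real.exp k := by
  have hterm : (k : ℝ) ^ k / (k.factorial : ℝ) ≤ Real.exp k := by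
    refine le_trans ?_ (Real.sum_le_exp_of_nonneg (by positivity) (k + 1))
    have := Finset.single_le_sum (f := fun i => (k : ℝ) ^ i / (i.factorial : ℝ))
      (fun i _ => by positivity) (Finset.self_mem_range_succ k)
    simpa using this
  have hf : (0 : ℝ) < (k.factorial : ℝ) := by exact_mod_cast k.factorial_pos
  calc (k : ℝ) ^ k = (k.factorial : ℝ) * ((k : ℝ) ^ k / (k.factorial : ℝ)) := by field_simp
    _ ≤ (k.factorial : ℝ) * Real.exp k := by
        exact mul_le_mul_of_nonneg_left hterm hf.le

/-- `C(n,j) ≤ (e n / j)^j` for `j ≥ 1`. -/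
lemma choose_le_epow (n j : ℕ) (hj : 1 ≤ j) :
    (n.choose j : ℝ) ≤ (Real.exp 1 * n / j) ^ j := by
  have hj0 : (0 : ℝ) < (j : ℝ) := by exact_mod_cast hj
  have hf : (0 : ℝ) < (j.factorial : ℝ) := by exact_mod_cast j.factorial_pos
  have h1 : (n.choose j : ℝ) ≤ (n : ℝ) ^ j / (j.factorial : ℝ) :=
    Nat.choose_le_pow_div j n
  refine h1.trans ?_
  rw [div_pow, mul_pow, div_le_div_iff₀ hf (by positivity)]
  have hee : Real.exp 1 ^ j = Real.exp j := by
    rw [← Real.exp_one_rpow (j : ℝ), Real.rpow_natCast]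
  calc (n : ℝ) ^ j * (j : ℝ) ^ j ≤ (n : ℝ) ^ j * ((j.factorial : ℝ) * Real.exp j) := by
        exact mul_le_mul_of_nonneg_left (pow_self_le_fact_mul_exp j) (by positivity)
    _ = Real.exp 1 ^ j * (n : ℝ) ^ j * (j.factorial : ℝ) := by rw [hee]; ring

theorem small_sets_estimate (β d : ℝ) (hβ : 1 < β) (hd : d > 2 + β) :
    ∃ ε > (0 : ℝ), ∃ C : ℝ, ∀ N k : ℕ, 1 ≤ N → 1 ≤ k → (k : ℝ) ≤ ε * N →
      (N : ℝ) * (N.choose k : ℝ) * (N.choose (⌈β * k⌉₊ - 1) : ℝ) *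
          Real.rpow (((⌈β * k⌉₊ - 1).choose k : ℝ) / (N.choose k : ℝ)) d ≤
        (k : ℝ) * (C * Real.rpow ((k : ℝ) / N) (d - β - 2)) ^ k := by
  have hβ0 : (0 : ℝ) < β := lt_trans one_pos hβ
  refine ⟨1 / (2 * β), by positivity, Real.exp (1 + β) * β ^ (d : ℝ), ?_⟩
  intro N k hN hk hkN
  simp only [Real.rpow_eq_pow]
  set m : ℕ := ⌈β * k⌉₊ - 1 with hm
  have hk0 : (0 : ℝ) < (k : ℝ) := by exact_mod_cast hk
  have hN0 : (0 : ℝ) < (N : ℝ) := by exact_mod_cast hN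
  -- k < β k
  have hkβk : (k : ℝ) < β * k := by
    nlinarith
  have hceil : k < ⌈β * (k : ℕ)⌉₊ := Nat.lt_ceil.2 (by exact_mod_cast hkβk)
  have hkm : k ≤ m := by omega
  have hm1 : 1 ≤ m := le_trans hk hkm
  have hmcast : (m : ℝ) = (⌈β * (k : ℕ)⌉₊ : ℝ) - 1 := by
    have : 1 ≤ ⌈β * (k : ℕ)⌉₊ := by omega
    rw [hm]
    push_cast [Nat.cast_sub this]
    ring
  have hmβk : (m : ℝ) ≤ β * k := by
    have := Nat.ceil_lt_add_one (a := β * (k : ℕ)) (by positivity)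
    rw [hmcast]; linarith
  -- k ≤ N and m ≤ N
  have hkNR : (k : ℝ) ≤ (N : ℝ) := by
    have h2β : (1 : ℝ) ≤ 2 * β := by nlinarith
    calc (k : ℝ) ≤ 1 / (2 * β) * N := hkN
      _ ≤ 1 * N := by
          apply mul_le_mul_of_nonneg_right _ hN0.le
          rw [div_le_one (by positivity)]; exact h2β
      _ = N := one_mul _
  have hkN' : k ≤ N := by exact_mod_cast hkNR
  have hmNR : (m : ℝ) ≤ (N : ℝ) := by
    have : β * k ≤ β * (1 / (2 * β) * N) := by
      exact mul_le_mul_of_nonneg_left hkN hβ0.le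
    have h2 : β * (1 / (2 * β) * N) = N / 2 := by field_simp
    nlinarith
  have hmN : m ≤ N := by exact_mod_cast hmNR
  have hchN : (0 : ℝ) < (N.choose k : ℝ) := by exact_mod_cast Nat.choose_pos hkN'
  have hm0 : (0 : ℝ) < (m : ℝ) := by exact_mod_cast hm1
  have he : (0 : ℝ) < Real.exp 1 := Real.exp_pos 1
  have hbase : (0 : ℝ) < Real.exp 1 * N / k := by positivity
  have hbase1 : (1 : ℝ) ≤ Real.exp 1 * N / k := by
    rw [le_div_iff₀ hk0]
    have h1e : (1 : ℝ) ≤ Real.exp 1 := by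
      have := Real.add_one_le_exp (1 : ℝ); linarith
    nlinarith
  have hd0 : (0 : ℝ) ≤ d := by linarith
  -- bound 1 : choose N k
  have B1 : (N.choose k : ℝ) ≤ (Real.exp 1 * N / k) ^ k := choose_le_epow N k hk
  -- bound 2 : choose N m
  have B2 : (N.choose m : ℝ) ≤ (Real.exp 1 * N / k) ^ (β * k : ℝ) := by
    have b1 : (N.choose m : ℝ) ≤ (Real.exp 1 * N / m) ^ m := choose_le_epow N m hm1
    have b2 : (Real.exp 1 * N / m) ^ m ≤ (Real.exp 1 * N / k) ^ m := by
      apply pow_le_pow_left₀ (by positivity)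
      apply div_le_div_of_nonneg_left (by positivity) hk0
      exact_mod_cast hkm
    have b3 : (Real.exp 1 * N / k) ^ m ≤ (Real.exp 1 * N / k) ^ (β * k : ℝ) := by
      rw [← Real.rpow_natCast (Real.exp 1 * N / k) m]
      exact Real.rpow_le_rpow_of_exponent_le hbase1 hmβk
    exact b1.trans (b2.trans b3)
  -- bound 3 : ratio
  have B3 : ((m.choose k : ℝ) / (N.choose k : ℝ)) ^ (d : ℝ) ≤
      (β * k / N) ^ (d * k : ℝ) := by
    have r1 : (m.choose k : ℝ) / (N.choose k : ℝ) ≤ ((m : ℝ) / N) ^ k := by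
      rw [div_pow, div_le_div_iff₀ hchN (by positivity)]
      exact_mod_cast (choose_ratio_nat m N k hmN).trans_eq (Nat.mul_comm _ _)
    have r2 : ((m : ℝ) / N) ^ k ≤ (β * k / N) ^ k := by
      gcongr
    have r3 : ((m.choose k : ℝ) / (N.choose k : ℝ)) ^ (d : ℝ) ≤
        (((β * k / N) ^ k : ℝ)) ^ (d : ℝ) := by
      apply Real.rpow_le_rpow (by positivity) (r1.trans r2) hd0
    refine r3.trans_eq ?_
    rw [← Real.rpow_natCast (β * k / N) k, ← Real.rpow_mul (by positivity), mul_comm (k : ℝ) d]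
  -- combine
  have hLHS : (N : ℝ) * (N.choose k : ℝ) * (N.choose m : ℝ) *
      ((m.choose k : ℝ) / (N.choose k : ℝ)) ^ (d : ℝ) ≤
      (N : ℝ) * ((Real.exp 1 * N / k) ^ ((1 + β) * k : ℝ) * (β * k / N) ^ (d * k : ℝ)) := by
    have e1 : (Real.exp 1 * N / k) ^ k * (Real.exp 1 * N / k) ^ (β * k : ℝ)
        = (Real.exp 1 * N / k) ^ ((1 + β) * k : ℝ) := by
      rw [← Real.rpow_natCast (Real.exp 1 * N / k) k, ← Real.rpow_add hbase]
      ring_nf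
    calc (N : ℝ) * (N.choose k : ℝ) * (N.choose m : ℝ) *
        ((m.choose k : ℝ) / (N.choose k : ℝ)) ^ (d : ℝ)
        ≤ (N : ℝ) * ((Real.exp 1 * N / k) ^ k) * ((Real.exp 1 * N / k) ^ (β * k : ℝ)) *
          ((β * k / N) ^ (d * k : ℝ)) := by
          apply mul_le_mul
          · apply mul_le_mul
            · exact mul_le_mul_of_nonneg_left B1 hN0.le
            · exact B2
            · positivity
            · positivity
          · exact B3
          · positivity
          · positivity
      _ = (N : ℝ) * ((Real.exp 1 * N / k) ^ ((1 + β) * k : ℝ) * (β * k / N) ^ (d * k : ℝ)) := by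
          rw [← e1]; ring
  -- algebraic identity: A = B * (k/N)^k
  set t : ℝ := (k : ℝ) / N with ht
  have ht0 : (0 : ℝ) < t := by positivity
  set Cc : ℝ := Real.exp (1 + β) * β ^ (d : ℝ) with hCc
  have hCc0 : (0 : ℝ) < Cc := by
    apply mul_pos (Real.exp_pos _) (Real.rpow_pos_of_pos hβ0 d)
  have hB0 : (0 : ℝ) < (Cc * t ^ (d - β - 2 : ℝ)) ^ k := by
    apply pow_pos (mul_pos hCc0 (Real.rpow_pos_of_pos ht0 _))
  have hA0 : (0 : ℝ) < (Real.exp 1 * N / k) ^ ((1 + β) * k : ℝ) * (β * k / N) ^ (d * k : ℝ) :=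
    mul_pos (Real.rpow_pos_of_pos hbase _) (Real.rpow_pos_of_pos (by positivity) _)
  have key : (Real.exp 1 * N / k) ^ ((1 + β) * k : ℝ) * (β * k / N) ^ (d * k : ℝ)
      = (Cc * t ^ (d - β - 2 : ℝ)) ^ k * t ^ k := by
    have hrhs0 : (0 : ℝ) < (Cc * t ^ (d - β - 2 : ℝ)) ^ k * t ^ k :=
      mul_pos hB0 (pow_pos ht0 k)
    apply Real.log_injOn_pos (Set.mem_Ioi.2 hA0) (Set.mem_Ioi.2 hrhs0)
    have hβt : (0 : ℝ) < β * k / N := by positivity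
    rw [Real.log_mul (ne_of_gt (Real.rpow_pos_of_pos hbase _))
        (ne_of_gt (Real.rpow_pos_of_pos hβt _)),
      Real.log_rpow hbase, Real.log_rpow hβt,
      Real.log_mul (ne_of_gt hB0) (ne_of_gt (pow_pos ht0 k)),
      Real.log_pow, Real.log_pow,
      Real.log_mul (ne_of_gt hCc0) (ne_of_gt (Real.rpow_pos_of_pos ht0 _)),
      Real.log_rpow ht0, hCc,
      Real.log_mul (ne_of_gt (Real.exp_pos _)) (ne_of_gt (Real.rpow_pos_of_pos hβ0 _)),
      Real.log_exp, Real.log_rpow hβ0]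
    have l1 : Real.log (Real.exp 1 * N / k) = 1 - Real.log t := by
      rw [Real.log_div (by positivity) (ne_of_gt hk0), Real.log_mul (ne_of_gt he) (ne_of_gt hN0),
        Real.log_exp, ht, Real.log_div (ne_of_gt hk0) (ne_of_gt hN0)]
      ring
    have l2 : Real.log (β * k / N) = Real.log β + Real.log t := by
      rw [Real.log_div (by positivity) (ne_of_gt hN0), Real.log_mul (ne_of_gt hβ0) (ne_of_gt hk0),
        ht, Real.log_div (ne_of_gt hk0) (ne_of_gt hN0)]
      ring
    rw [l1, l2]
    ring
  -- final
  have final : (N : ℝ) * t ^ k ≤ (k : ℝ) := by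
    have ht1 : t ≤ 1 := by
      rw [ht, div_le_one hN0]; exact hkNR
    have : t ^ k ≤ t ^ 1 := pow_le_pow_of_le_one ht0.le ht1 hk
    calc (N : ℝ) * t ^ k ≤ (N : ℝ) * t ^ 1 := mul_le_mul_of_nonneg_left this hN0.le
      _ = (k : ℝ) := by rw [pow_one, ht]; field_simp
  calc (N : ℝ) * (N.choose k : ℝ) * (N.choose m : ℝ) *
      ((m.choose k : ℝ) / (N.choose k : ℝ)) ^ (d : ℝ)
      ≤ (N : ℝ) * ((Real.exp 1 * N / k) ^ ((1 + β) * k : ℝ) * (β * k / N) ^ (d * k : ℝ)) := hLHS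
    _ = (N : ℝ) * t ^ k * (Cc * t ^ (d - β - 2 : ℝ)) ^ k := by rw [key]; ring
    _ ≤ (k : ℝ) * (Cc * t ^ (d - β - 2 : ℝ)) ^ k :=
        mul_le_mul_of_nonneg_right final hB0.le
end
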